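/- Water-filling characterization of the optimal apparent profile: for every deferral rate φ with 0 ≤ φ ≤ φ_crit and φ < 1, there exist thresholds τ₁ ≤ τ₂ such that Σ_i max{τ₁ − q_i, 0} = Σ_i max{q_i − τ₂, 0} = φ, and the profile t* defined by t*_i = min{max{q_i, τ₁}, τ₂} is the unique maximizer of the Shannon entropy H over all apparent profiles attainable with rate φ; that is, the optimal strategies raise the lowest components of q to a common level τ₁, lower the highest components to a common level τ₂, and leave intermediate components unperturbed. -/

import Mathlib

/-!
STATEMENT 6. Water-filling characterization of the optimal apparent profile:
for every deferral rate `φ` with `0 ≤ φ ≤ φ_crit` and `φ < 1`, there exist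
thresholds `τ₁ ≤ τ₂` with `∑ max{τ₁ - qᵢ, 0} = ∑ max{qᵢ - τ₂, 0} = φ`, such that
the profile `t*ᵢ = min{max{qᵢ, τ₁}, τ₂}` is the unique maximizer of the Shannon
entropy over all apparent profiles attainable with rate `φ`.
-/

/-- Base-2 Shannon entropy `H(t) = -∑ tᵢ log₂ tᵢ` (with `0·log₂ 0 = 0`). -/
noncomputable def shannon {n : ℕ} (t : Fin n → ℝ) : ℝ :=
  -∑ i, t i * Real.logb 2 (t i)

/-- A pair `(s,r)` is feasible for actual profile `q` and deferral rate `φ`. -/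
def Feasible {n : ℕ} (q : Fin n → ℝ) (φ : ℝ) (s r : Fin n → ℝ) : Prop :=
  (∀ i, 0 ≤ s i) ∧ (∀ i, 0 ≤ r i) ∧ (∀ i, 0 ≤ q i - s i + r i) ∧
    (∑ i, s i = φ) ∧ (∑ i, r i = φ)

/-- `t` is an apparent profile attainable from `q` with deferral rate `φ`. -/
def Attainable {n : ℕ} (q : Fin n → ℝ) (φ : ℝ) (t : Fin n → ℝ) : Prop :=
  ∃ s r, Feasible q φ s r ∧ t = fun i => q i - s i + r i

/-- Total variation distance `TV(p‖q) = ½ ∑ |pᵢ - qᵢ|`. -/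
noncomputable def tvDist {n : ℕ} (p q : Fin n → ℝ) : ℝ :=
  (1 / 2) * ∑ i, |p i - q i|



lemma scalar_le {x y : ℝ} (hx : 0 ≤ x) (hy : 0 < y) :
    x * Real.log y - x * Real.log x ≤ y - x := by
  rcases eq_or_lt_of_le hx with h | h
  · simp [← h]; linarith
  · have hd : 0 < y / x := div_pos hy h
    have h1 := Real.log_le_sub_one_of_pos hd
    rw [Real.log_div hy.ne' h.ne'] at h1
    have h2 := mul_le_mul_of_nonneg_left h1 h.le
    rw [mul_sub, mul_sub, mul_div_cancel₀ _ h.ne', mul_one] at h2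
    linarith

lemma scalar_lt {x y : ℝ} (hx : 0 ≤ x) (hy : 0 < y) (hxy : x ≠ y) :
    x * Real.log y - x * Real.log x < y - x := by
  rcases eq_or_lt_of_le hx with h | h
  · subst h; simpa using hy
  · have hd : 0 < y / x := div_pos hy h
    have hne : y / x ≠ 1 := by
      intro hc; exact hxy ((div_eq_one_iff_eq h.ne').mp hc).symm
    have h1 := Real.log_lt_sub_one_of_pos hd hne
    have h2 := mul_lt_mul_of_pos_left h1 h
    rw [Real.log_div hy.ne' h.ne'] at h2
    rw [mul_sub, mul_sub, mul_div_cancel₀ _ h.ne', mul_one] at h2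
    linarith

lemma ptwise {τ₁ τ₂ : ℝ} (hτ : τ₁ ≤ τ₂) (c : ℝ) :
    c - min (max c τ₁) τ₂ = max (c - τ₂) 0 - max (τ₁ - c) 0 := by
  rcases le_total c τ₁ with h1 | h1
  · rw [max_comm, max_eq_left h1, min_eq_left hτ,
      max_eq_right (by linarith : c - τ₂ ≤ 0), max_eq_left (by linarith : 0 ≤ τ₁ - c)]
    ring
  · rcases le_total c τ₂ with h2 | h2
    · rw [max_eq_left h1, min_eq_left h2,
        max_eq_right (by linarith : c - τ₂ ≤ 0), max_eq_right (by linarith : τ₁ - c ≤ 0)]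
      ring
    · rw [max_eq_left h1, min_eq_right h2,
        max_eq_left (by linarith : 0 ≤ c - τ₂), max_eq_right (by linarith : τ₁ - c ≤ 0)]
      ring

lemma possum {n : ℕ} (x : Fin n → ℝ) (hx : ∑ i, x i = 0) :
    ∑ i, max (x i) 0 = (1/2) * ∑ i, |x i| := by
  have h : ∀ i ∈ Finset.univ, max (x i) 0 = (x i + |x i|) / 2 := by
    intro i _; rcases le_total (x i) 0 with h | h
    · rw [max_eq_right h, abs_of_nonpos h]; ring
    · rw [max_eq_left h, abs_of_nonneg h]; ring
  rw [Finset.sum_congr rfl h, ← Finset.sum_div, Finset.sum_add_distrib, hx]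
  ring

lemma core {n : ℕ} (q x : Fin n → ℝ) (τ₁ τ₂ φ : ℝ)
    (hτ : τ₁ ≤ τ₂) (hτ₁ : 0 < τ₁)
    (hg : ∑ i, max (τ₁ - q i) 0 = φ) (hh : ∑ i, max (q i - τ₂) 0 = φ)
    (hx0 : ∀ i, 0 ≤ x i) (hsum : ∑ i, (x i - q i) = 0)
    (hN : ∑ i, max (q i - x i) 0 ≤ φ) :
    (∑ i, min (max (q i) τ₁) τ₂ * Real.log (min (max (q i) τ₁) τ₂) ≤
      ∑ i, x i * Real.log (x i)) ∧
    (∑ i, min (max (q i) τ₁) τ₂ * Real.log (min (max (q i) τ₁) τ₂) =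
      ∑ i, x i * Real.log (x i) → x = fun i => min (max (q i) τ₁) τ₂) := by
  set y : Fin n → ℝ := fun i => min (max (q i) τ₁) τ₂ with hy
  set a := Real.log τ₁
  set b := Real.log τ₂
  have hτ₂ : 0 < τ₂ := lt_of_lt_of_le hτ₁ hτ
  have hy1 : ∀ i, τ₁ ≤ y i := fun i => le_min (le_max_right _ _) hτ
  have hy2 : ∀ i, y i ≤ τ₂ := fun i => min_le_right _ _
  have hypos : ∀ i, 0 < y i := fun i => lt_of_lt_of_le hτ₁ (hy1 i)
  have hab : a ≤ b := Real.log_le_log hτ₁ hτ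
  have hya : ∀ i, a ≤ Real.log (y i) := fun i => Real.log_le_log hτ₁ (hy1 i)
  have hyb : ∀ i, Real.log (y i) ≤ b := fun i => Real.log_le_log (hypos i) (hy2 i)
  -- sums
  have hqy : ∑ i, (q i - y i) = 0 := by
    have : ∀ i ∈ Finset.univ, q i - y i = max (q i - τ₂) 0 - max (τ₁ - q i) 0 :=
      fun i _ => ptwise hτ (q i)
    rw [Finset.sum_congr rfl this, Finset.sum_sub_distrib, hg, hh, sub_self]
  have hyx : ∑ i, (y i - x i) = 0 := by
    have : ∀ i ∈ Finset.univ, y i - x i = (q i - x i) - (q i - y i) := fun i _ => by ring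
    rw [Finset.sum_congr rfl this, Finset.sum_sub_distrib, hqy, sub_zero]
    have : ∀ i ∈ Finset.univ, q i - x i = -(x i - q i) := fun i _ => by ring
    rw [Finset.sum_congr rfl this, Finset.sum_neg_distrib, hsum, neg_zero]
  have hPN : ∑ i, max (x i - q i) 0 = ∑ i, max (q i - x i) 0 := by
    have key : ∀ i ∈ Finset.univ,
        max (x i - q i) 0 - max (q i - x i) 0 = x i - q i := by
      intro i _; rcases le_total (x i) (q i) with h | h
      · rw [max_eq_right (by linarith : x i - q i ≤ 0),
          max_eq_left (by linarith : 0 ≤ q i - x i)]; ring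
      · rw [max_eq_left (by linarith : 0 ≤ x i - q i),
          max_eq_right (by linarith : q i - x i ≤ 0)]; ring
    have := Finset.sum_congr rfl key
    rw [Finset.sum_sub_distrib, hsum] at this
    linarith
  -- key inequality : ∑ (y-x) log y ≤ 0
  have key1 : ∑ i, (y i - q i) * Real.log (y i) = a * φ - b * φ := by
    have : ∀ i ∈ Finset.univ, (y i - q i) * Real.log (y i) =
        a * max (τ₁ - q i) 0 - b * max (q i - τ₂) 0 := by
      intro i _
      rcases le_total (q i) τ₁ with h1 | h1
      · have hyi : y i = τ₁ := by
          rw [hy]; simp only; rw [max_comm, max_eq_left h1, min_eq_left hτ]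
        rw [hyi, max_eq_left (by linarith : 0 ≤ τ₁ - q i),
          max_eq_right (by linarith : q i - τ₂ ≤ 0)]
        ring
      · rcases le_total (q i) τ₂ with h2 | h2
        · have hyi : y i = q i := by
            rw [hy]; simp only; rw [max_eq_left h1, min_eq_left h2]
          rw [hyi, max_eq_right (by linarith : τ₁ - q i ≤ 0),
            max_eq_right (by linarith : q i - τ₂ ≤ 0)]
          ring
        · have hyi : y i = τ₂ := by
            rw [hy]; simp only; rw [max_eq_left h1, min_eq_right h2]
          rw [hyi, max_eq_right (by linarith : τ₁ - q i ≤ 0),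
            max_eq_left (by linarith : 0 ≤ q i - τ₂)]
          ring
    rw [Finset.sum_congr rfl this, Finset.sum_sub_distrib, ← Finset.mul_sum,
      ← Finset.mul_sum, hg, hh]
  have key2 : ∑ i, (q i - x i) * Real.log (y i) ≤ (b - a) * φ := by
    have step : ∀ i ∈ Finset.univ, (q i - x i) * Real.log (y i) ≤
        b * max (q i - x i) 0 - a * max (x i - q i) 0 := by
      intro i _
      rcases le_total (x i) (q i) with h | h
      · rw [max_eq_left (by linarith : 0 ≤ q i - x i),
          max_eq_right (by linarith : x i - q i ≤ 0), mul_zero, sub_zero]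
        nlinarith [hyb i, sub_nonneg.mpr h]
      · rw [max_eq_right (by linarith : q i - x i ≤ 0),
          max_eq_left (by linarith : 0 ≤ x i - q i), mul_zero, zero_sub]
        nlinarith [hya i, sub_nonneg.mpr h]
    have h1 := Finset.sum_le_sum step
    rw [Finset.sum_sub_distrib, ← Finset.mul_sum, ← Finset.mul_sum, hPN] at h1
    have hN0 : 0 ≤ ∑ i, max (q i - x i) 0 :=
      Finset.sum_nonneg fun i _ => le_max_right _ _
    nlinarith
  have keysum : ∑ i, (y i - x i) * Real.log (y i) ≤ 0 := by
    have : ∀ i ∈ Finset.univ, (y i - x i) * Real.log (y i) =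
        (y i - q i) * Real.log (y i) + (q i - x i) * Real.log (y i) :=
      fun i _ => by ring
    rw [Finset.sum_congr rfl this, Finset.sum_add_distrib, key1]
    linarith
  -- termwise concavity bound
  have term : ∀ i ∈ Finset.univ, y i * Real.log (y i) - x i * Real.log (x i) ≤
      (y i - x i) * Real.log (y i) + (y i - x i) := by
    intro i _
    have h := scalar_le (hx0 i) (hypos i)
    nlinarith [h]
  have main : ∑ i, y i * Real.log (y i) ≤ ∑ i, x i * Real.log (x i) := by
    have h1 := Finset.sum_le_sum term
    rw [Finset.sum_add_distrib, Finset.sum_sub_distrib, hyx] at h1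
    linarith [keysum]
  constructor
  · exact main
  · intro heq0
    have heq : ∑ i, y i * Real.log (y i) = ∑ i, x i * Real.log (x i) := heq0
    have hzero : ∑ i, ((y i - x i) * Real.log (y i) + (y i - x i)
        - (y i * Real.log (y i) - x i * Real.log (x i))) = 0 := by
      rw [Finset.sum_sub_distrib, Finset.sum_add_distrib, hyx, Finset.sum_sub_distrib, heq]
      have h2 : ∑ i, (y i - x i) * Real.log (y i) ≥ 0 := by
        have h1 := Finset.sum_le_sum term
        rw [Finset.sum_add_distrib, Finset.sum_sub_distrib, hyx, heq] at h1
        linarith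
      linarith [keysum, h2]
    have hterm0 : ∀ i ∈ Finset.univ, (y i - x i) * Real.log (y i) + (y i - x i)
        - (y i * Real.log (y i) - x i * Real.log (x i)) = 0 := by
      intro i hi
      refine (Finset.sum_eq_zero_iff_of_nonneg ?_).mp hzero i hi
      intro j _
      have h := scalar_le (hx0 j) (hypos j)
      nlinarith [h]
    funext i
    by_contra hne
    have h := scalar_lt (hx0 i) (hypos i) hne
    have h0 := hterm0 i (Finset.mem_univ i)
    nlinarith [h]

lemma shannon_eq {n : ℕ} (t : Fin n → ℝ) :
    shannon t = -((∑ i, t i * Real.log (t i)) / Real.log 2) := by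
  unfold shannon Real.logb
  congr 1
  rw [Finset.sum_div]
  exact Finset.sum_congr rfl fun i _ => by ring


theorem water_filling_optimal_profile {n : ℕ} (hn : 2 ≤ n)
    (q : Fin n → ℝ) (hq0 : ∀ i, 0 ≤ q i) (hq1 : ∑ i, q i = 1)
    (φ : ℝ) (hφ0 : 0 ≤ φ) (hφcrit : φ ≤ tvDist (fun _ => 1 / (n : ℝ)) q)
    (hφ1 : φ < 1) :
    ∃ τ₁ τ₂ : ℝ, τ₁ ≤ τ₂ ∧
      (∑ i, max (τ₁ - q i) 0 = φ) ∧
      (∑ i, max (q i - τ₂) 0 = φ) ∧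
      Attainable q φ (fun i => min (max (q i) τ₁) τ₂) ∧
      (∀ t : Fin n → ℝ, Attainable q φ t →
        shannon t ≤ shannon (fun i => min (max (q i) τ₁) τ₂)) ∧
      (∀ t : Fin n → ℝ, Attainable q φ t →
        shannon t = shannon (fun i => min (max (q i) τ₁) τ₂) →
        t = fun i => min (max (q i) τ₁) τ₂) := by
  have hnpos : (0:ℝ) < n := by
    have : (0:ℕ) < n := by omega
    exact_mod_cast this
  have hn1 : (1:ℝ) ≤ n := by
    have : (1:ℕ) ≤ n := by omega
    exact_mod_cast this
  have hq_le1 : ∀ i, q i ≤ 1 := by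
    intro i
    rw [← hq1]
    exact Finset.single_le_sum (fun j _ => hq0 j) (Finset.mem_univ i)
  -- tvDist characterizations
  have hzsum : ∑ i : Fin n, ((1:ℝ)/n - q i) = 0 := by
    rw [Finset.sum_sub_distrib, hq1, Finset.sum_const, Finset.card_univ, Fintype.card_fin,
      nsmul_eq_mul, mul_one_div_cancel hnpos.ne', sub_self]
  have hzsum' : ∑ i : Fin n, (q i - (1:ℝ)/n) = 0 := by
    have : ∀ i ∈ Finset.univ, q i - (1:ℝ)/n = -((1:ℝ)/n - q i) := fun i _ => by ring
    rw [Finset.sum_congr rfl this, Finset.sum_neg_distrib, hzsum, neg_zero]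
  have hTV1 : ∑ i : Fin n, max ((1:ℝ)/n - q i) 0 = tvDist (fun _ => 1/(n:ℝ)) q := by
    rw [possum _ hzsum]; rfl
  have hTV2 : ∑ i : Fin n, max (q i - (1:ℝ)/n) 0 = tvDist (fun _ => 1/(n:ℝ)) q := by
    rw [possum _ hzsum', tvDist]
    congr 1
    exact Finset.sum_congr rfl fun i _ => by rw [abs_sub_comm]
  rcases eq_or_lt_of_le hφ0 with hφz | hφpos
  · -- φ = 0 case
    subst hφz
    have hts : (fun i => min (max (q i) (0:ℝ)) 1) = q := by
      funext i
      rw [max_eq_left (hq0 i), min_eq_left (hq_le1 i)]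
    refine ⟨0, 1, by norm_num, ?_, ?_, ?_, ?_, ?_⟩
    · exact Finset.sum_eq_zero fun i _ => max_eq_right (by linarith [hq0 i])
    · exact Finset.sum_eq_zero fun i _ => max_eq_right (by linarith [hq_le1 i])
    · refine ⟨fun _ => 0, fun _ => 0, ⟨fun _ => le_refl 0, fun _ => le_refl 0,
        fun i => by simpa using hq0 i, by simp, by simp⟩, ?_⟩
      rw [hts]; funext i; ring
    · intro t ht
      obtain ⟨s, r, ⟨hs, hr, _, hssum, hrsum⟩, htt⟩ := ht
      have hs0 : ∀ i, s i = 0 := fun i =>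
        (Finset.sum_eq_zero_iff_of_nonneg (fun j _ => hs j)).mp hssum i (Finset.mem_univ i)
      have hr0 : ∀ i, r i = 0 := fun i =>
        (Finset.sum_eq_zero_iff_of_nonneg (fun j _ => hr j)).mp hrsum i (Finset.mem_univ i)
      have : t = q := by
        rw [htt]; funext i; rw [hs0 i, hr0 i]; ring
      rw [this, hts]
    · intro t ht _
      obtain ⟨s, r, ⟨hs, hr, _, hssum, hrsum⟩, htt⟩ := ht
      have hs0 : ∀ i, s i = 0 := fun i =>
        (Finset.sum_eq_zero_iff_of_nonneg (fun j _ => hs j)).mp hssum i (Finset.mem_univ i)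
      have hr0 : ∀ i, r i = 0 := fun i =>
        (Finset.sum_eq_zero_iff_of_nonneg (fun j _ => hr j)).mp hrsum i (Finset.mem_univ i)
      rw [htt, hts]; funext i; rw [hs0 i, hr0 i]; ring
  · -- φ > 0 case
    have gcont : Continuous (fun τ : ℝ => ∑ i, max (τ - q i) 0) :=
      continuous_finset_sum _ fun i _ => (continuous_id.sub continuous_const).max continuous_const
    have hcont : Continuous (fun τ : ℝ => ∑ i, max (q i - τ) 0) :=
      continuous_finset_sum _ fun i _ => (continuous_const.sub continuous_id).max continuous_const
    have g0 : ∑ i : Fin n, max ((0:ℝ) - q i) 0 = 0 :=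
      Finset.sum_eq_zero fun i _ => max_eq_right (by linarith [hq0 i])
    have h1' : ∑ i : Fin n, max (q i - 1) 0 = 0 :=
      Finset.sum_eq_zero fun i _ => max_eq_right (by linarith [hq_le1 i])
    have hmem1 : φ ∈ Set.Icc ((fun τ : ℝ => ∑ i, max (τ - q i) 0) 0)
        ((fun τ : ℝ => ∑ i, max (τ - q i) 0) (1/n)) := by
      simp only [g0]
      exact ⟨hφ0, by rw [hTV1] at *; exact hφcrit⟩
    obtain ⟨τ₁, hτ₁mem, hτ₁eq⟩ :=
      intermediate_value_Icc (by positivity : (0:ℝ) ≤ 1/(n:ℝ)) gcont.continuousOn hmem1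
    have hmem2 : φ ∈ Set.Icc ((fun τ : ℝ => ∑ i, max (q i - τ) 0) 1)
        ((fun τ : ℝ => ∑ i, max (q i - τ) 0) (1/n)) := by
      simp only [h1']
      exact ⟨hφ0, by rw [hTV2] at *; exact hφcrit⟩
    obtain ⟨τ₂, hτ₂mem, hτ₂eq⟩ :=
      intermediate_value_Icc' (by
        rw [div_le_one hnpos]; exact hn1) hcont.continuousOn hmem2
    simp only at hτ₁eq hτ₂eq
    have hτ : τ₁ ≤ τ₂ := hτ₁mem.2.trans hτ₂mem.1
    have hτ₁pos : 0 < τ₁ := by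
      rcases eq_or_lt_of_le hτ₁mem.1 with h | h
      · exfalso
        rw [← h] at hτ₁eq
        have : ∑ i : Fin n, max ((0:ℝ) - q i) 0 = φ := by
          convert hτ₁eq using 2 with i
        rw [g0] at this
        linarith
      · exact h
    have hg' : ∑ i, max (τ₁ - q i) 0 = φ := hτ₁eq
    have hh' : ∑ i, max (q i - τ₂) 0 = φ := hτ₂eq
    have hymin : ∀ i, τ₁ ≤ min (max (q i) τ₁) τ₂ := fun i => le_min (le_max_right _ _) hτ
    refine ⟨τ₁, τ₂, hτ, hg', hh', ?_, ?_, ?_⟩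
    · -- Attainable
      refine ⟨fun i => max (q i - τ₂) 0, fun i => max (τ₁ - q i) 0,
        ⟨fun i => le_max_right _ _, fun i => le_max_right _ _, ?_, hh', hg'⟩, ?_⟩
      · intro i
        have hp := ptwise hτ (q i)
        have := hymin i
        linarith
      · funext i
        have hp := ptwise hτ (q i)
        simp only
        linarith
    · -- maximality
      intro t ht
      obtain ⟨s, r, ⟨hs, hr, hqsr, hssum, hrsum⟩, htt⟩ := ht
      have hx0 : ∀ i, 0 ≤ t i := by intro i; rw [htt]; exact hqsr i
      have hsum : ∑ i, (t i - q i) = 0 := by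
        have : ∀ i ∈ Finset.univ, t i - q i = r i - s i := by
          intro i _; rw [htt]; ring
        rw [Finset.sum_congr rfl this, Finset.sum_sub_distrib, hssum, hrsum, sub_self]
      have hNb : ∑ i, max (q i - t i) 0 ≤ φ := by
        rw [← hssum]
        refine Finset.sum_le_sum fun i _ => ?_
        refine max_le ?_ (hs i)
        rw [htt]
        have := hr i
        simp only
        linarith
      have hc := (core q t τ₁ τ₂ φ hτ hτ₁pos hg' hh' hx0 hsum hNb).1
      rw [shannon_eq, shannon_eq]
      have hlog2 : (0:ℝ) < Real.log 2 := Real.log_pos one_lt_two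
      have hdiv : (∑ i, min (max (q i) τ₁) τ₂ * Real.log (min (max (q i) τ₁) τ₂)) / Real.log 2
          ≤ (∑ i, t i * Real.log (t i)) / Real.log 2 := by
        apply div_le_div_of_nonneg_right hc hlog2.le
      linarith
    · -- uniqueness
      intro t ht heq
      obtain ⟨s, r, ⟨hs, hr, hqsr, hssum, hrsum⟩, htt⟩ := ht
      have hx0 : ∀ i, 0 ≤ t i := by intro i; rw [htt]; exact hqsr i
      have hsum : ∑ i, (t i - q i) = 0 := by
        have : ∀ i ∈ Finset.univ, t i - q i = r i - s i := by
          intro i _; rw [htt]; ring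
        rw [Finset.sum_congr rfl this, Finset.sum_sub_distrib, hssum, hrsum, sub_self]
      have hNb : ∑ i, max (q i - t i) 0 ≤ φ := by
        rw [← hssum]
        refine Finset.sum_le_sum fun i _ => ?_
        refine max_le ?_ (hs i)
        rw [htt]
        have := hr i
        simp only
        linarith
      rw [shannon_eq, shannon_eq] at heq
      have hlog2 : (0:ℝ) < Real.log 2 := Real.log_pos one_lt_two
      have heq2 : (∑ i, min (max (q i) τ₁) τ₂ * Real.log (min (max (q i) τ₁) τ₂))
          = ∑ i, t i * Real.log (t i) := by
        have h3 : (∑ i, t i * Real.log (t i)) / Real.log 2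
            = (∑ i, min (max (q i) τ₁) τ₂ * Real.log (min (max (q i) τ₁) τ₂)) / Real.log 2 :=
          neg_injective heq
        have h4 := congrArg (· * Real.log 2) h3
        simp only [div_mul_cancel₀ _ hlog2.ne'] at h4
        linarith
      exact (core q t τ₁ τ₂ φ hτ hτ₁pos hg' hh' hx0 hsum hNb).2 heq2
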